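/- The series ∑_{n=0}^∞ [ ∑_{i=0}^{n} max(i, n − i)·binom(n, i)·(1/2)^{n} ]·(1/3)·(2/3)^{n} converges and its sum equals 1 + √5/5. (This is the expected run length of consecutive empty center sites in the three-site parking model with screening.) -/

import Mathlib

open Finset

namespace ExpectedRunAux

/-- Real-valued central binomial coefficient. -/
noncomputable def cb (m : ℕ) : ℝ := (Nat.centralBinom m : ℝ)

lemma cb_nonneg (m : ℕ) : 0 ≤ cb m := Nat.cast_nonneg _

lemma cb_succ (m : ℕ) : ((m : ℝ) + 1) * cb (m + 1) = (4 * m + 2) * cb m := by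
  have h := Nat.succ_mul_centralBinom_succ m
  have h' : (((m + 1) * Nat.centralBinom (m + 1) : ℕ) : ℝ)
      = ((2 * (2 * m + 1) * Nat.centralBinom m : ℕ) : ℝ) := by exact_mod_cast h
  push_cast at h'
  unfold cb
  linarith

lemma cb_le (m : ℕ) : cb m ≤ 4 ^ m := by
  have h2 : (2 * m).choose m ≤ ∑ i ∈ range (2 * m + 1), (2 * m).choose i :=
    Finset.single_le_sum (fun i _ => Nat.zero_le _) (by simp [Nat.lt_succ]; omega)
  rw [Nat.sum_range_choose] at h2
  have h3 : Nat.centralBinom m ≤ 4 ^ m := by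
    calc Nat.centralBinom m = (2 * m).choose m := rfl
    _ ≤ 2 ^ (2 * m) := h2
    _ = 4 ^ m := by rw [pow_mul]; norm_num
  unfold cb
  calc (Nat.centralBinom m : ℝ) ≤ ((4 ^ m : ℕ) : ℝ) := by exact_mod_cast h3
  _ = 4 ^ m := by push_cast; ring

lemma two_mul_weighted (m : ℕ) :
    2 * ∑ i ∈ range (m + 1), (i : ℝ) * cb i * cb (m - i)
      = m * ∑ i ∈ range (m + 1), cb i * cb (m - i) := by
  have hrefl : ∑ i ∈ range (m + 1), ((m - i : ℕ) : ℝ) * cb (m - i) * cb i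
      = ∑ i ∈ range (m + 1), (i : ℝ) * cb i * cb (m - i) := by
    rw [← Finset.sum_range_reflect (fun i => (i : ℝ) * cb i * cb (m - i)) (m + 1)]
    apply Finset.sum_congr rfl
    intro i hi
    simp only [Finset.mem_range] at hi
    have h1 : m + 1 - 1 - i = m - i := by omega
    have h2 : m - (m - i) = i := by omega
    rw [h1, h2]
  calc 2 * ∑ i ∈ range (m + 1), (i : ℝ) * cb i * cb (m - i)
      = ∑ i ∈ range (m + 1), ((m - i : ℕ) : ℝ) * cb (m - i) * cb i
        + ∑ i ∈ range (m + 1), (i : ℝ) * cb i * cb (m - i) := by rw [hrefl]; ring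
  _ = ∑ i ∈ range (m + 1),
        (((m - i : ℕ) : ℝ) * cb (m - i) * cb i + (i : ℝ) * cb i * cb (m - i)) := by
      rw [Finset.sum_add_distrib]
  _ = ∑ i ∈ range (m + 1), (m : ℝ) * (cb i * cb (m - i)) := by
      apply Finset.sum_congr rfl
      intro i hi
      simp only [Finset.mem_range] at hi
      have hle : i ≤ m := by omega
      have : ((m - i : ℕ) : ℝ) = (m : ℝ) - i := by
        rw [Nat.cast_sub hle]
      rw [this]; ring
  _ = m * ∑ i ∈ range (m + 1), cb i * cb (m - i) := by rw [Finset.mul_sum]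

lemma conv (m : ℕ) : ∑ i ∈ range (m + 1), cb i * cb (m - i) = 4 ^ m := by
  induction m with
  | zero => simp [cb, Nat.centralBinom]
  | succ m ih =>
    have hshift : ∑ i ∈ range (m + 2), (i : ℝ) * cb i * cb (m + 1 - i)
        = ∑ i ∈ range (m + 1), ((i : ℝ) + 1) * cb (i + 1) * cb (m - i) := by
      rw [Finset.sum_range_succ' (fun i => (i : ℝ) * cb i * cb (m + 1 - i)) (m + 1)]
      simp only [Nat.cast_zero, zero_mul, add_zero]
      apply Finset.sum_congr rfl
      intro i _
      have : m + 1 - (i + 1) = m - i := by omega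
      rw [this]
      push_cast
      ring
    have key : ((m : ℝ) + 1) * ∑ i ∈ range (m + 2), cb i * cb (m + 1 - i)
        = ((m : ℝ) + 1) * (4 * 4 ^ m) := by
      have h1 := two_mul_weighted (m + 1)
      push_cast at h1
      have h2 : ∑ i ∈ range (m + 1), ((i : ℝ) + 1) * cb (i + 1) * cb (m - i)
          = ∑ i ∈ range (m + 1), ((4 * i + 2) * cb i * cb (m - i)) := by
        apply Finset.sum_congr rfl
        intro i _
        rw [show ((i : ℝ) + 1) * cb (i + 1) * cb (m - i)
            = (((i : ℝ) + 1) * cb (i + 1)) * cb (m - i) by ring, cb_succ]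
      have h3 : ∑ i ∈ range (m + 1), ((4 * (i : ℝ) + 2) * cb i * cb (m - i))
          = 4 * ∑ i ∈ range (m + 1), (i : ℝ) * cb i * cb (m - i)
            + 2 * ∑ i ∈ range (m + 1), cb i * cb (m - i) := by
        rw [Finset.mul_sum, Finset.mul_sum, ← Finset.sum_add_distrib]
        apply Finset.sum_congr rfl
        intro i _
        ring
      have h4 := two_mul_weighted m
      calc ((m : ℝ) + 1) * ∑ i ∈ range (m + 2), cb i * cb (m + 1 - i)
          = 2 * ∑ i ∈ range (m + 2), (i : ℝ) * cb i * cb (m + 1 - i) := by linarith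
      _ = 2 * ∑ i ∈ range (m + 1), ((4 * (i : ℝ) + 2) * cb i * cb (m - i)) := by
          rw [hshift, h2]
      _ = 8 * ∑ i ∈ range (m + 1), (i : ℝ) * cb i * cb (m - i)
            + 4 * ∑ i ∈ range (m + 1), cb i * cb (m - i) := by rw [h3]; ring
      _ = 4 * (m : ℝ) * ∑ i ∈ range (m + 1), cb i * cb (m - i)
            + 4 * ∑ i ∈ range (m + 1), cb i * cb (m - i) := by linarith
      _ = ((m : ℝ) + 1) * (4 * 4 ^ m) := by rw [ih]; ring
    have hm : ((m : ℝ) + 1) ≠ 0 := by positivity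
    have := mul_left_cancel₀ hm key
    rw [this]
    ring

lemma summable_a : Summable (fun m => cb m * (1 / 9 : ℝ) ^ m) := by
  apply Summable.of_nonneg_of_le
    (fun m => mul_nonneg (cb_nonneg m) (by positivity)) (fun m => ?_)
    (summable_geometric_of_lt_one (by norm_num) (by norm_num) : Summable fun m => (4 / 9 : ℝ) ^ m)
  calc cb m * (1 / 9 : ℝ) ^ m ≤ 4 ^ m * (1 / 9) ^ m :=
        mul_le_mul_of_nonneg_right (cb_le m) (by positivity)
  _ = (4 / 9) ^ m := by rw [← mul_pow]; norm_num

noncomputable def A : ℝ := ∑' m, cb m * (1 / 9 : ℝ) ^ m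

lemma A_sq : A * A = 9 / 5 := by
  have hn : Summable fun m => ‖cb m * (1 / 9 : ℝ) ^ m‖ := by
    apply summable_a.congr
    intro m
    exact (Real.norm_of_nonneg (mul_nonneg (cb_nonneg m) (by positivity))).symm
  have h := tsum_mul_tsum_eq_tsum_sum_range_of_summable_norm hn hn
  unfold A
  rw [h]
  have hterm : ∀ n : ℕ, ∑ k ∈ range (n + 1),
      (cb k * (1 / 9 : ℝ) ^ k) * (cb (n - k) * (1 / 9) ^ (n - k)) = (4 / 9) ^ n := by
    intro n
    have h1 : ∀ k ∈ range (n + 1),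
        (cb k * (1 / 9 : ℝ) ^ k) * (cb (n - k) * (1 / 9) ^ (n - k))
          = (cb k * cb (n - k)) * (1 / 9) ^ n := by
      intro k hk
      simp only [Finset.mem_range] at hk
      have hp : (1 / 9 : ℝ) ^ k * (1 / 9) ^ (n - k) = (1 / 9) ^ n := by
        rw [← pow_add]
        congr 1
        omega
      calc (cb k * (1 / 9 : ℝ) ^ k) * (cb (n - k) * (1 / 9) ^ (n - k))
          = (cb k * cb (n - k)) * ((1 / 9 : ℝ) ^ k * (1 / 9) ^ (n - k)) := by ring
      _ = (cb k * cb (n - k)) * (1 / 9) ^ n := by rw [hp]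
    rw [Finset.sum_congr rfl h1, ← Finset.sum_mul, conv, ← mul_pow]
    norm_num
  rw [tsum_congr hterm, tsum_geometric_of_lt_one (by norm_num) (by norm_num)]
  norm_num

lemma A_val : A = 3 * Real.sqrt 5 / 5 := by
  have h0 : 0 ≤ A := tsum_nonneg fun m => mul_nonneg (cb_nonneg m) (by positivity)
  have h5 : Real.sqrt 5 ^ 2 = 5 := Real.sq_sqrt (by norm_num)
  have h5' : 0 < Real.sqrt 5 := Real.sqrt_pos.mpr (by norm_num)
  have hx : (3 * Real.sqrt 5 / 5) ^ 2 = 9 / 5 := by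
    rw [div_pow, mul_pow, h5]
    norm_num
  have hz : (A - 3 * Real.sqrt 5 / 5) * (A + 3 * Real.sqrt 5 / 5) = 0 := by
    have hA := A_sq
    nlinarith [hx]
  rcases mul_eq_zero.mp hz with h | h
  · linarith
  · nlinarith

lemma summable_b : Summable (fun m : ℕ => (m : ℝ) * cb m * (1 / 9 : ℝ) ^ m) := by
  apply Summable.of_nonneg_of_le
    (fun m => mul_nonneg (mul_nonneg (Nat.cast_nonneg m) (cb_nonneg m)) (by positivity))
    (fun m => ?_)
    ((hasSum_coe_mul_geometric_of_norm_lt_one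
      (r := (4 / 9 : ℝ)) (by rw [Real.norm_eq_abs, abs_of_nonneg (by norm_num : (0:ℝ) ≤ 4/9)]; norm_num)).summable)
  calc (m : ℝ) * cb m * (1 / 9 : ℝ) ^ m ≤ (m : ℝ) * 4 ^ m * (1 / 9) ^ m := by
        apply mul_le_mul_of_nonneg_right _ (by positivity)
        exact mul_le_mul_of_nonneg_left (cb_le m) (by positivity)
  _ = (m : ℝ) * (4 / 9) ^ m := by rw [mul_assoc, ← mul_pow]; norm_num

noncomputable def B : ℝ := ∑' m : ℕ, (m : ℝ) * cb m * (1 / 9 : ℝ) ^ m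

lemma B_val : B = 2 / 5 * A := by
  have h0 : B = ∑' m : ℕ, (((m + 1 : ℕ) : ℝ) * cb (m + 1) * (1 / 9 : ℝ) ^ (m + 1)) := by
    unfold B
    rw [Summable.tsum_eq_zero_add summable_b]
    simp
  have h1 : ∀ m : ℕ, ((m + 1 : ℕ) : ℝ) * cb (m + 1) * (1 / 9 : ℝ) ^ (m + 1)
      = 4 / 9 * ((m : ℝ) * cb m * (1 / 9) ^ m) + 2 / 9 * (cb m * (1 / 9) ^ m) := by
    intro m
    have hc := cb_succ m
    calc ((m + 1 : ℕ) : ℝ) * cb (m + 1) * (1 / 9 : ℝ) ^ (m + 1)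
        = (((m : ℝ) + 1) * cb (m + 1)) * (1 / 9 : ℝ) ^ (m + 1) := by push_cast; ring
    _ = ((4 * m + 2) * cb m) * ((1 / 9 : ℝ) ^ m * (1 / 9)) := by rw [hc, pow_succ]
    _ = 4 / 9 * ((m : ℝ) * cb m * (1 / 9) ^ m) + 2 / 9 * (cb m * (1 / 9) ^ m) := by ring
  have h2 : (∑' m : ℕ, (((m + 1 : ℕ) : ℝ) * cb (m + 1) * (1 / 9 : ℝ) ^ (m + 1)))
      = 4 / 9 * B + 2 / 9 * A := by
    rw [tsum_congr h1,
      Summable.tsum_add (summable_b.mul_left _) (summable_a.mul_left _),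
      tsum_mul_left, tsum_mul_left]
    rfl
  have h3 : B = 4 / 9 * B + 2 / 9 * A := by
    conv_lhs => rw [h0]
    rw [h2]
  linarith

lemma hasSum_b :
    HasSum (fun m : ℕ => (m : ℝ) * cb m * (1 / 9 : ℝ) ^ m) (6 * Real.sqrt 5 / 25) := by
  have h := summable_b.hasSum
  have : B = 6 * Real.sqrt 5 / 25 := by
    rw [B_val, A_val]
    ring
  rwa [show (∑' m : ℕ, (m : ℝ) * cb m * (1 / 9 : ℝ) ^ m) = B from rfl, this] at h

lemma choose_succ_real (n i : ℕ) :
    ((i : ℝ) + 1) * n.choose (i + 1) = ((n : ℝ) - i) * n.choose i := by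
  rcases le_or_gt i n with h | h
  · have hnat := Nat.choose_succ_right_eq n i
    have h' : ((n.choose (i + 1) * (i + 1) : ℕ) : ℝ) = ((n.choose i * (n - i) : ℕ) : ℝ) := by
      exact_mod_cast hnat
    rw [Nat.cast_mul, Nat.cast_mul, Nat.cast_sub h] at h'
    push_cast at h' ⊢
    linarith
  · rw [Nat.choose_eq_zero_of_lt h, Nat.choose_eq_zero_of_lt (by omega)]
    simp

lemma telescope (n M : ℕ) :
    ∑ i ∈ range M, ((n : ℝ) - 2 * i) * n.choose i = M * n.choose M := by
  have hstep : ∀ i ∈ range M, ((n : ℝ) - 2 * i) * n.choose i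
      = (fun j : ℕ => (j : ℝ) * n.choose j) (i + 1) - (fun j : ℕ => (j : ℝ) * n.choose j) i := by
    intro i _
    simp only
    push_cast
    rw [choose_succ_real]
    ring
  rw [Finset.sum_congr rfl hstep, Finset.sum_range_sub (fun j : ℕ => (j : ℝ) * n.choose j) M]
  simp

lemma sum_id_choose (n : ℕ) :
    2 * ∑ i ∈ range (n + 1), (i : ℝ) * n.choose i = n * 2 ^ n := by
  have hrefl : ∑ i ∈ range (n + 1), ((n - i : ℕ) : ℝ) * n.choose (n - i)
      = ∑ i ∈ range (n + 1), (i : ℝ) * n.choose i := by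
    rw [← Finset.sum_range_reflect (fun i => (i : ℝ) * n.choose i) (n + 1)]
    apply Finset.sum_congr rfl
    intro i hi
    have h1 : n + 1 - 1 - i = n - i := by omega
    rw [h1]
  calc 2 * ∑ i ∈ range (n + 1), (i : ℝ) * n.choose i
      = ∑ i ∈ range (n + 1), ((n - i : ℕ) : ℝ) * n.choose (n - i)
        + ∑ i ∈ range (n + 1), (i : ℝ) * n.choose i := by rw [hrefl]; ring
  _ = ∑ i ∈ range (n + 1),
        (((n - i : ℕ) : ℝ) * n.choose (n - i) + (i : ℝ) * n.choose i) := by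
      rw [Finset.sum_add_distrib]
  _ = ∑ i ∈ range (n + 1), (n : ℝ) * n.choose i := by
      apply Finset.sum_congr rfl
      intro i hi
      simp only [Finset.mem_range] at hi
      have hle : i ≤ n := by omega
      rw [Nat.choose_symm hle, Nat.cast_sub hle]
      ring
  _ = (n : ℝ) * ∑ i ∈ range (n + 1), (n.choose i : ℝ) := by rw [Finset.mul_sum]
  _ = n * 2 ^ n := by
      have := Nat.sum_range_choose n
      have h' : ∑ i ∈ range (n + 1), (n.choose i : ℝ) = 2 ^ n := by
        exact_mod_cast congrArg (Nat.cast : ℕ → ℝ) this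
      rw [h']

lemma max_cast (n i : ℕ) (h : i ≤ n) :
    ((max i (n - i) : ℕ) : ℝ) = (i : ℝ) + max ((n : ℝ) - 2 * i) 0 := by
  rcases le_or_gt (2 * i) n with h2 | h2
  · have hmax : max i (n - i) = n - i := max_eq_right (by omega)
    have hmax2 : max ((n : ℝ) - 2 * i) 0 = (n : ℝ) - 2 * i := by
      apply max_eq_left
      have : (2 * i : ℝ) ≤ n := by exact_mod_cast h2
      linarith
    rw [hmax, hmax2, Nat.cast_sub h]
    ring
  · have hmax : max i (n - i) = i := max_eq_left (by omega)
    have hmax2 : max ((n : ℝ) - 2 * i) 0 = 0 := by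
      apply max_eq_right
      have : (n : ℝ) ≤ 2 * i := by exact_mod_cast (by omega : n ≤ 2 * i)
      linarith
    rw [hmax, hmax2]
    simp

lemma inner_formula (n : ℕ) :
    ∑ i ∈ range (n + 1), ((max i (n - i) : ℕ) : ℝ) * n.choose i
      = (n : ℝ) * 2 ^ n / 2 + (((n + 1) / 2 : ℕ) : ℝ) * n.choose ((n + 1) / 2) := by
  have hsplit : ∑ i ∈ range (n + 1), ((max i (n - i) : ℕ) : ℝ) * n.choose i
      = ∑ i ∈ range (n + 1), (i : ℝ) * n.choose i
        + ∑ i ∈ range (n + 1), max ((n : ℝ) - 2 * i) 0 * n.choose i := by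
    rw [← Finset.sum_add_distrib]
    apply Finset.sum_congr rfl
    intro i hi
    simp only [Finset.mem_range] at hi
    rw [max_cast n i (by omega)]
    ring
  have h1 : ∑ i ∈ range (n + 1), (i : ℝ) * n.choose i = n * 2 ^ n / 2 := by
    have := sum_id_choose n
    linarith
  have h2 : ∑ i ∈ range (n + 1), max ((n : ℝ) - 2 * i) 0 * n.choose i
      = ∑ i ∈ range ((n + 1) / 2), ((n : ℝ) - 2 * i) * n.choose i := by
    have hm : (n + 1) / 2 ≤ n + 1 := by omega
    rw [Finset.range_eq_Ico,
      ← Finset.sum_Ico_consecutive (fun i => max ((n : ℝ) - 2 * i) 0 * n.choose i)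
        (Nat.zero_le _) hm]
    have hz : ∑ i ∈ Finset.Ico ((n + 1) / 2) (n + 1),
        max ((n : ℝ) - 2 * i) 0 * n.choose i = 0 := by
      apply Finset.sum_eq_zero
      intro i hi
      simp only [Finset.mem_Ico] at hi
      have hle : (n : ℝ) - 2 * i ≤ 0 := by
        have : n ≤ 2 * i := by omega
        have : (n : ℝ) ≤ 2 * i := by exact_mod_cast this
        linarith
      rw [max_eq_right hle, zero_mul]
    rw [hz, add_zero, ← Finset.range_eq_Ico]
    apply Finset.sum_congr rfl
    intro i hi
    simp only [Finset.mem_range] at hi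
    have hge : 0 ≤ (n : ℝ) - 2 * i := by
      have : 2 * i ≤ n := by omega
      have : (2 * i : ℝ) ≤ n := by exact_mod_cast this
      linarith
    rw [max_eq_left hge]
  rw [hsplit, h1, h2, telescope]

/-- The "odd part" term. -/
noncomputable def d (n : ℕ) : ℝ :=
  (((n + 1) / 2 : ℕ) : ℝ) * n.choose ((n + 1) / 2) * (1 / 3) ^ (n + 1)

lemma d_even (k : ℕ) : d (2 * k) = 1 / 3 * ((k : ℝ) * cb k * (1 / 9) ^ k) := by
  unfold d
  have h1 : (2 * k + 1) / 2 = k := by omega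
  rw [h1]
  have hcb : ((2 * k).choose k : ℝ) = cb k := by
    unfold cb
    rw [Nat.centralBinom_eq_two_mul_choose]
  have hp : (1 / 3 : ℝ) ^ (2 * k + 1) = 1 / 3 * (1 / 9) ^ k := by
    rw [pow_succ, pow_mul]
    norm_num
    ring
  rw [hcb, hp]
  ring

lemma d_odd (k : ℕ) :
    d (2 * k + 1) = 1 / 2 * (((k + 1 : ℕ) : ℝ) * cb (k + 1) * (1 / 9) ^ (k + 1)) := by
  unfold d
  have h1 : (2 * k + 1 + 1) / 2 = k + 1 := by omega
  rw [h1]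
  have hch : 2 * (2 * k + 1).choose (k + 1) = Nat.centralBinom (k + 1) := by
    have hs : (2 * k + 1).choose k = (2 * k + 1).choose (k + 1) := by
      have := Nat.choose_symm (by omega : k + 1 ≤ 2 * k + 1)
      rw [show 2 * k + 1 - (k + 1) = k by omega] at this
      omega
    have h2 : Nat.centralBinom (k + 1) = (2 * (k + 1)).choose (k + 1) :=
      Nat.centralBinom_eq_two_mul_choose (k + 1)
    have h3 : (2 * (k + 1)).choose (k + 1)
        = (2 * k + 1).choose k + (2 * k + 1).choose (k + 1) := by
      rw [show 2 * (k + 1) = (2 * k + 1) + 1 by ring]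
      exact Nat.choose_succ_succ _ _
    omega
  have hcr : ((2 * k + 1).choose (k + 1) : ℝ) = cb (k + 1) / 2 := by
    have := congrArg (Nat.cast : ℕ → ℝ) hch
    push_cast at this
    unfold cb
    linarith
  have hp : (1 / 3 : ℝ) ^ (2 * k + 1 + 1) = (1 / 9) ^ (k + 1) := by
    rw [show 2 * k + 1 + 1 = 2 * (k + 1) by ring, pow_mul]
    norm_num
  rw [hcr, hp]
  push_cast
  ring

lemma hasSum_d : HasSum d (Real.sqrt 5 / 5) := by
  have he : HasSum (fun k => d (2 * k)) (2 * Real.sqrt 5 / 25) := by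
    have h := hasSum_b.mul_left (1 / 3)
    rw [show (1 / 3 : ℝ) * (6 * Real.sqrt 5 / 25) = 2 * Real.sqrt 5 / 25 by ring] at h
    have hf : (fun k => d (2 * k))
        = fun k : ℕ => 1 / 3 * ((k : ℝ) * cb k * (1 / 9) ^ k) := funext d_even
    rw [hf]
    exact h
  have ho : HasSum (fun k => d (2 * k + 1)) (3 * Real.sqrt 5 / 25) := by
    have hshift : HasSum (fun k : ℕ => ((k + 1 : ℕ) : ℝ) * cb (k + 1) * (1 / 9 : ℝ) ^ (k + 1))
        (6 * Real.sqrt 5 / 25) := by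
      apply (hasSum_nat_add_iff (f := fun m : ℕ => (m : ℝ) * cb m * (1 / 9 : ℝ) ^ m) 1).mpr
      simpa using hasSum_b
    have h := hshift.mul_left (1 / 2)
    rw [show (1 / 2 : ℝ) * (6 * Real.sqrt 5 / 25) = 3 * Real.sqrt 5 / 25 by ring] at h
    have hf : (fun k => d (2 * k + 1))
        = fun k : ℕ => 1 / 2 * (((k + 1 : ℕ) : ℝ) * cb (k + 1) * (1 / 9) ^ (k + 1)) :=
      funext d_odd
    rw [hf]
    exact h
  have h := he.even_add_odd ho
  rwa [show 2 * Real.sqrt 5 / 25 + 3 * Real.sqrt 5 / 25 = Real.sqrt 5 / 5 by ring] at h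

end ExpectedRunAux

open ExpectedRunAux in
/-- The expected run length of consecutive empty center sites in the
three-site parking model with screening equals `1 + √5/5`. -/
theorem expected_run_length :
    HasSum
      (fun n : ℕ =>
        (∑ i ∈ Finset.range (n + 1),
            ((max i (n - i) : ℕ) : ℝ) * (n.choose i : ℝ) * (1/2) ^ n)
          * ((1/3) * (2/3) ^ n))
      (1 + Real.sqrt 5 / 5) := by
  have h1 : HasSum (fun n : ℕ => 1 / 6 * ((n : ℝ) * (2 / 3) ^ n)) 1 := by
    have h := hasSum_coe_mul_geometric_of_norm_lt_one
      (r := (2 / 3 : ℝ)) (by rw [Real.norm_eq_abs, abs_of_nonneg (by norm_num : (0:ℝ) ≤ 2/3)]; norm_num)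
    have h' := h.mul_left (1 / 6)
    rw [show (1 / 6 : ℝ) * ((2 / 3) / (1 - 2 / 3) ^ 2) = 1 by norm_num] at h'
    exact h'
  have h := h1.add hasSum_d
  have hfun : ∀ n : ℕ,
      (∑ i ∈ Finset.range (n + 1),
          ((max i (n - i) : ℕ) : ℝ) * (n.choose i : ℝ) * (1/2) ^ n)
        * ((1/3) * (2/3) ^ n)
      = 1 / 6 * ((n : ℝ) * (2 / 3) ^ n) + d n := by
    intro n
    have hs : ∑ i ∈ Finset.range (n + 1),
        ((max i (n - i) : ℕ) : ℝ) * (n.choose i : ℝ) * (1/2) ^ n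
        = (∑ i ∈ Finset.range (n + 1), ((max i (n - i) : ℕ) : ℝ) * (n.choose i : ℝ))
          * (1/2 : ℝ) ^ n := by
      rw [Finset.sum_mul]
    rw [hs, inner_formula n]
    unfold d
    have e1 : ((2 : ℝ)) ^ n * (1 / 2) ^ n = 1 := by rw [← mul_pow]; norm_num
    have e2 : ((1 / 2 : ℝ)) ^ n * (2 / 3) ^ n = (1 / 3) ^ n := by rw [← mul_pow]; norm_num
    have e3 : (1 / 3 : ℝ) ^ (n + 1) = (1 / 3) ^ n * (1 / 3) := pow_succ _ _
    calc ((n : ℝ) * 2 ^ n / 2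
          + (((n + 1) / 2 : ℕ) : ℝ) * n.choose ((n + 1) / 2)) * (1/2 : ℝ) ^ n
          * ((1/3) * (2/3) ^ n)
        = (n : ℝ) / 6 * (2 ^ n * (1 / 2) ^ n) * (2 / 3) ^ n
          + (((n + 1) / 2 : ℕ) : ℝ) * n.choose ((n + 1) / 2) * (1 / 3)
            * ((1 / 2) ^ n * (2 / 3) ^ n) := by ring
    _ = 1 / 6 * ((n : ℝ) * (2 / 3) ^ n)
          + (((n + 1) / 2 : ℕ) : ℝ) * n.choose ((n + 1) / 2) * (1 / 3) ^ (n + 1) := by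
        rw [e1, e2, e3]
        ring
  have hfe : (fun n : ℕ =>
      (∑ i ∈ Finset.range (n + 1),
          ((max i (n - i) : ℕ) : ℝ) * (n.choose i : ℝ) * (1/2) ^ n)
        * ((1/3) * (2/3) ^ n))
      = fun n : ℕ => 1 / 6 * ((n : ℝ) * (2 / 3) ^ n) + d n := funext hfun
  rw [hfe]
  exact h
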